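/- arXiv:2510.10800 — 3 statements merged into one kernel-verified Lean document; each statement's English description precedes it below -/
import Mathlib

section
/- Let {Π_x}_{x∈X} and {Q_y}_{y∈Y} be two projective instruments (mutually orthogonal nonzero projections summing to identity). Suppose their total verifier sets coincide: ∪_x V(Π_x) = ∪_y V(Q_y), where V(P) = {ρ density operator : Tr(PρP) = 1}. Then for every x there exists a unique y with V(Π_x) = V(Q_y), and this correspondence is a bijection between X and Y with Π_x = Q_{y(x)}. -/
set_option linter.unusedSectionVars false

open Matrix ComplexOrder

namespace Stmt7Aux

variable {n : Type*} [Fintype n] [DecidableEq n]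

lemma diag_nonneg {A : Matrix n n ℂ} (hA : A.PosSemidef) (i : n) : 0 ≤ A i i := by
  have h := hA.dotProduct_mulVec_nonneg (Pi.single i 1)
  rw [Matrix.mulVec_single] at h
  simpa [dotProduct, Pi.single_apply, apply_ite, Finset.sum_ite_eq'] using h

lemma trace_nonneg {A : Matrix n n ℂ} (hA : A.PosSemidef) : 0 ≤ A.trace := by
  exact Finset.sum_nonneg fun i _ => diag_nonneg hA i

open scoped MatrixOrder Matrix.Norms.L2Operator in
lemma eq_zero_of_trace_eq_zero {A : Matrix n n ℂ} (hA : A.PosSemidef)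
    (h : A.trace = 0) : A = 0 := by
  obtain ⟨B, rfl⟩ := CStarAlgebra.nonneg_iff_eq_star_mul_self.mp hA.nonneg
  have hdiag : ∀ i, (Bᴴ * B) i i = 0 := by
    have := (Finset.sum_eq_zero_iff_of_nonneg (fun i _ => diag_nonneg hA i)).1 h
    exact fun i => this i (Finset.mem_univ i)
  have hB : B = 0 := by
    ext k i
    have h1 : (Bᴴ * B) i i = dotProduct (star fun k => B k i) (fun k => B k i) := by
      simp [Matrix.mul_apply, dotProduct, Matrix.conjTranspose_apply, mul_comm]
    have h2 := dotProduct_star_self_eq_zero.1 (h1 ▸ hdiag i)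
    exact congrFun h2 k
  simp [hB]


lemma smul_psd {A : Matrix n n ℂ} (hA : A.PosSemidef) {r : ℝ} (hr : 0 ≤ r) :
    ((r : ℂ) • A).PosSemidef := by
  refine Matrix.PosSemidef.of_dotProduct_mulVec_nonneg ?_ ?_
  · have := hA.1
    unfold Matrix.IsHermitian at *
    rw [Matrix.conjTranspose_smul, this]
    simp [Complex.star_def, Complex.conj_ofReal]
  · intro x
    have h := hA.dotProduct_mulVec_nonneg x
    rw [Matrix.smul_mulVec, dotProduct_smul]
    exact mul_nonneg (Complex.zero_le_real.2 hr) h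

lemma mul_vecMulVec (A : Matrix n n ℂ) (w v : n → ℂ) :
    A * Matrix.vecMulVec w v = Matrix.vecMulVec (A *ᵥ w) v := by
  ext i j
  simp [Matrix.mul_apply, Matrix.vecMulVec_apply, Matrix.mulVec, dotProduct,
    Finset.sum_mul, mul_assoc]

lemma vecMulVec_mulVec (w v u : n → ℂ) :
    Matrix.vecMulVec w v *ᵥ u = (v ⬝ᵥ u) • w := by
  ext i
  simp [Matrix.mulVec, dotProduct, Matrix.vecMulVec_apply, Finset.mul_sum, mul_assoc,
    mul_comm, mul_left_comm]

/-- the pure state built from a nonzero vector `w`. -/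
noncomputable def pure (w : n → ℂ) : Matrix n n ℂ :=
  ((∑ i, Complex.normSq (w i) : ℝ) : ℂ)⁻¹ • Matrix.vecMulVec w (star w)

lemma normSq_sum_pos {w : n → ℂ} (hw : w ≠ 0) : 0 < ∑ i, Complex.normSq (w i) := by
  apply Finset.sum_pos' (fun i _ => Complex.normSq_nonneg _)
  obtain ⟨i, hi⟩ := Function.ne_iff.1 hw
  exact ⟨i, Finset.mem_univ i, Complex.normSq_pos.2 hi⟩

lemma star_dot_self (w : n → ℂ) :
    star w ⬝ᵥ w = ((∑ i, Complex.normSq (w i) : ℝ) : ℂ) := by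
  simp only [dotProduct, Pi.star_apply, Complex.ofReal_sum]
  refine Finset.sum_congr rfl fun i _ => ?_
  rw [Complex.star_def, ← Complex.normSq_eq_conj_mul_self]

lemma pure_psd {w : n → ℂ} (hw : w ≠ 0) : (pure w).PosSemidef := by
  rw [pure, show ((∑ i, Complex.normSq (w i) : ℝ) : ℂ)⁻¹ =
    (((∑ i, Complex.normSq (w i) : ℝ)⁻¹ : ℝ) : ℂ) by push_cast; ring]
  apply smul_psd _ (inv_nonneg.2 (Finset.sum_nonneg fun i _ => Complex.normSq_nonneg _))
  refine Matrix.PosSemidef.of_dotProduct_mulVec_nonneg ?_ ?_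
  · ext i j
    simp [Matrix.conjTranspose_apply, Matrix.vecMulVec_apply, mul_comm]
  · intro x
    rw [vecMulVec_mulVec]
    rw [dotProduct_smul]
    have : star x ⬝ᵥ w = star (star w ⬝ᵥ x) := by
      simp [dotProduct, mul_comm]
    rw [this, smul_eq_mul, mul_comm]
    exact star_mul_self_nonneg _

lemma pure_trace {w : n → ℂ} (hw : w ≠ 0) : (pure w).trace = 1 := by
  have hr : ((∑ i, Complex.normSq (w i) : ℝ) : ℂ) ≠ 0 :=
    Complex.ofReal_ne_zero.2 (normSq_sum_pos hw).ne'
  rw [pure, Matrix.trace_smul]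
  have : (Matrix.vecMulVec w (star w)).trace = ((∑ i, Complex.normSq (w i) : ℝ) : ℂ) := by
    simp only [Matrix.trace, Matrix.diag_apply, Matrix.vecMulVec_apply, Pi.star_apply,
      Complex.ofReal_sum]
    refine Finset.sum_congr rfl fun i _ => ?_
    rw [mul_comm, Complex.star_def, ← Complex.normSq_eq_conj_mul_self]
  rw [this, smul_eq_mul, inv_mul_cancel₀ hr]

lemma pure_fixed {w : n → ℂ} (A : Matrix n n ℂ) (hA : A *ᵥ w = w) :
    A * pure w = pure w := by
  rw [pure, Matrix.mul_smul, mul_vecMulVec, hA]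

lemma pure_fixes {w : n → ℂ} (hw : w ≠ 0) (A : Matrix n n ℂ)
    (hA : A * pure w = pure w) : A *ᵥ w = w := by
  have hr : ((∑ i, Complex.normSq (w i) : ℝ) : ℂ) ≠ 0 :=
    Complex.ofReal_ne_zero.2 (normSq_sum_pos hw).ne'
  have hpw : pure w *ᵥ w = w := by
    rw [pure, Matrix.smul_mulVec, vecMulVec_mulVec, star_dot_self]
    rw [smul_smul, inv_mul_cancel₀ hr, one_smul]
  have := congrArg (fun M => M *ᵥ w) hA
  simpa [← Matrix.mulVec_mulVec, hpw] using this

lemma trace_compl {Pi ρ : Matrix n n ℂ} (hproj : Pi * Pi = Pi) :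
    ((1 - Pi) * ρ * (1 - Pi)).trace = ρ.trace - (Pi * ρ * Pi).trace := by
  have h1 : (Pi * ρ * Pi).trace = (Pi * ρ).trace := by
    rw [Matrix.trace_mul_comm, ← Matrix.mul_assoc, hproj]
  have h2 : (ρ * Pi).trace = (Pi * ρ).trace := Matrix.trace_mul_comm _ _
  simp only [Matrix.sub_mul, Matrix.mul_sub, Matrix.one_mul, Matrix.mul_one, Matrix.trace_sub]
  rw [h1, h2]
  ring

lemma trace_sandwich_nonneg {Pi ρ : Matrix n n ℂ} (hherm : Piᴴ = Pi)
    (hρ : ρ.PosSemidef) : 0 ≤ (Pi * ρ * Pi).trace := by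
  have := hρ.mul_mul_conjTranspose_same Pi
  rw [hherm] at this
  exact trace_nonneg this

lemma trace_sandwich_le {Pi ρ : Matrix n n ℂ} (hproj : Pi * Pi = Pi) (hherm : Piᴴ = Pi)
    (hρ : ρ.PosSemidef) : (Pi * ρ * Pi).trace ≤ ρ.trace := by
  have hh : (1 - Pi)ᴴ = 1 - Pi := by
    rw [Matrix.conjTranspose_sub, Matrix.conjTranspose_one, hherm]
  have h0 := trace_sandwich_nonneg hh hρ
  rw [trace_compl hproj] at h0
  exact sub_nonneg.1 h0

open scoped MatrixOrder in
lemma fix_of_trace_eq {Pi ρ : Matrix n n ℂ} (hproj : Pi * Pi = Pi) (hherm : Piᴴ = Pi)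
    (hρ : ρ.PosSemidef) (h : (Pi * ρ * Pi).trace = ρ.trace) : Pi * ρ = ρ := by
  have hh : (1 - Pi)ᴴ = 1 - Pi := by
    rw [Matrix.conjTranspose_sub, Matrix.conjTranspose_one, hherm]
  have hpsd := hρ.mul_mul_conjTranspose_same (1 - Pi)
  rw [hh] at hpsd
  have hz : (1 - Pi) * ρ * (1 - Pi) = 0 := by
    apply eq_zero_of_trace_eq_zero hpsd
    rw [trace_compl hproj, h, sub_self]
  set r := CFC.sqrt ρ with hrdef
  have hr2 : r * r = ρ := CFC.sqrt_mul_sqrt_self ρ hρ.nonneg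
  have hrh : rᴴ = r := (CFC.sqrt_nonneg ρ).posSemidef.isHermitian
  have key : (r * (1 - Pi))ᴴ * (r * (1 - Pi)) = (1 - Pi) * ρ * (1 - Pi) := by
    rw [Matrix.conjTranspose_mul, hrh, hh, Matrix.mul_assoc,
      ← Matrix.mul_assoc r r (1 - Pi), hr2, ← Matrix.mul_assoc]
  have hrS : r * (1 - Pi) = 0 := Matrix.conjTranspose_mul_self_eq_zero.1 (key.trans hz)
  have hρS : ρ * (1 - Pi) = 0 := by
    rw [← hr2, Matrix.mul_assoc, hrS, Matrix.mul_zero]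
  have hρPi : ρ * Pi = ρ := by
    rw [Matrix.mul_sub, Matrix.mul_one, sub_eq_zero] at hρS
    exact hρS.symm
  calc Pi * ρ = (ρ * Pi)ᴴ := by rw [Matrix.conjTranspose_mul, hherm, hρ.isHermitian]
  _ = ρᴴ := by rw [hρPi]
  _ = ρ := hρ.isHermitian

lemma verifier_iff {Pi ρ : Matrix n n ℂ} (hproj : Pi * Pi = Pi) (hherm : Piᴴ = Pi)
    (hρ : ρ.PosSemidef) (htr : ρ.trace = 1) :
    (Pi * ρ * Pi).trace = 1 ↔ Pi * ρ = ρ := by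
  constructor
  · intro h
    exact fix_of_trace_eq hproj hherm hρ (by rw [h, htr])
  · intro h
    have hρPi : ρ * Pi = ρ := by
      calc ρ * Pi = (Piᴴ * ρᴴ)ᴴ := by
            rw [← Matrix.conjTranspose_mul, Matrix.conjTranspose_conjTranspose]
      _ = (Pi * ρ)ᴴ := by rw [hherm, hρ.isHermitian]
      _ = ρᴴ := by rw [h]
      _ = ρ := hρ.isHermitian
    rw [h, hρPi, htr]

lemma fix_disjoint {A B ρ : Matrix n n ℂ} (hAB : A * B = 0)
    (hA : A * ρ = ρ) (hB : B * ρ = ρ) (htr : ρ.trace = 1) : False := by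
  have hz : ρ = 0 := by
    calc ρ = A * ρ := hA.symm
    _ = A * (B * ρ) := by rw [hB]
    _ = (A * B) * ρ := (Matrix.mul_assoc _ _ _).symm
    _ = 0 := by rw [hAB, Matrix.zero_mul]
  rw [hz, Matrix.trace_zero] at htr
  exact one_ne_zero htr.symm

lemma exists_nonzero_col {A : Matrix n n ℂ} (hA : A ≠ 0) :
    ∃ j, A *ᵥ Pi.single j 1 ≠ 0 := by
  by_contra h
  push_neg at h
  apply hA
  ext i j
  have h2 := congrFun (h j) i
  rw [Matrix.mulVec_single] at h2
  simpa using h2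

lemma ext_of_mulVec_single {M N : Matrix n n ℂ}
    (h : ∀ j, M *ᵥ Pi.single j 1 = N *ᵥ Pi.single j 1) : M = N := by
  ext i j
  have h2 := congrFun (h j) i
  rw [Matrix.mulVec_single, Matrix.mulVec_single] at h2
  simpa using h2

end Stmt7Aux

open Stmt7Aux
/-- If two projective instruments have the same total set of verifier states,
then their verifier sets match up outcome-by-outcome via a unique
correspondence, which is a bijection identifying the projections. -/
theorem stmt_7 {n X Y : Type*} [Fintype n] [DecidableEq n]
    [Fintype X] [DecidableEq X] [Fintype Y] [DecidableEq Y]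
    (P : X → Matrix n n ℂ) (Q : Y → Matrix n n ℂ)
    (hPproj : ∀ x, P x * P x = P x ∧ (P x)ᴴ = P x)
    (hPorth : ∀ x x', x ≠ x' → P x * P x' = 0)
    (hPsum : ∑ x, P x = 1)
    (hPnz : ∀ x, P x ≠ 0)
    (hQproj : ∀ y, Q y * Q y = Q y ∧ (Q y)ᴴ = Q y)
    (hQorth : ∀ y y', y ≠ y' → Q y * Q y' = 0)
    (hQsum : ∑ y, Q y = 1)
    (hQnz : ∀ y, Q y ≠ 0)
    (hunion : (⋃ x, {ρ : Matrix n n ℂ | ρ.PosSemidef ∧ ρ.trace = 1 ∧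
        (P x * ρ * P x).trace = 1}) =
      (⋃ y, {ρ : Matrix n n ℂ | ρ.PosSemidef ∧ ρ.trace = 1 ∧
        (Q y * ρ * Q y).trace = 1})) :
    (∀ x, ∃! y, {ρ : Matrix n n ℂ | ρ.PosSemidef ∧ ρ.trace = 1 ∧
        (P x * ρ * P x).trace = 1} =
      {ρ : Matrix n n ℂ | ρ.PosSemidef ∧ ρ.trace = 1 ∧
        (Q y * ρ * Q y).trace = 1}) ∧
    ∃ e : X ≃ Y, ∀ x, P x = Q (e x) := by
  classical
  -- move from the trace description of verifiers to the fixed-point description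
  have hPtoQ : ∀ (ρ : Matrix n n ℂ), ρ.PosSemidef → ρ.trace = 1 → ∀ x,
      P x * ρ = ρ → ∃ y, Q y * ρ = ρ := by
    intro ρ h1 h2 x h3
    have hmem : ρ ∈ ⋃ x, {ρ : Matrix n n ℂ | ρ.PosSemidef ∧ ρ.trace = 1 ∧
        (P x * ρ * P x).trace = 1} :=
      Set.mem_iUnion.2 ⟨x, h1, h2,
        (verifier_iff (hPproj x).1 (hPproj x).2 h1 h2).2 h3⟩
    rw [hunion] at hmem
    obtain ⟨y, hy⟩ := Set.mem_iUnion.1 hmem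
    exact ⟨y, (verifier_iff (hQproj y).1 (hQproj y).2 h1 h2).1 hy.2.2⟩
  have hQtoP : ∀ (ρ : Matrix n n ℂ), ρ.PosSemidef → ρ.trace = 1 → ∀ y,
      Q y * ρ = ρ → ∃ x, P x * ρ = ρ := by
    intro ρ h1 h2 y h3
    have hmem : ρ ∈ ⋃ y, {ρ : Matrix n n ℂ | ρ.PosSemidef ∧ ρ.trace = 1 ∧
        (Q y * ρ * Q y).trace = 1} :=
      Set.mem_iUnion.2 ⟨y, h1, h2,
        (verifier_iff (hQproj y).1 (hQproj y).2 h1 h2).2 h3⟩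
    rw [← hunion] at hmem
    obtain ⟨x, hx⟩ := Set.mem_iUnion.1 hmem
    exact ⟨x, (verifier_iff (hPproj x).1 (hPproj x).2 h1 h2).1 hx.2.2⟩
  -- pure verifier for each outcome
  choose jP hjP using fun x => exists_nonzero_col (hPnz x)
  choose jQ hjQ using fun y => exists_nonzero_col (hQnz y)
  set vP : X → n → ℂ := fun x => P x *ᵥ Pi.single (jP x) 1 with hvP
  set vQ : Y → n → ℂ := fun y => Q y *ᵥ Pi.single (jQ y) 1 with hvQ
  have hvPfix : ∀ x, P x *ᵥ vP x = vP x := fun x => by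
    rw [hvP]; dsimp only; rw [Matrix.mulVec_mulVec, (hPproj x).1]
  have hvQfix : ∀ y, Q y *ᵥ vQ y = vQ y := fun y => by
    rw [hvQ]; dsimp only; rw [Matrix.mulVec_mulVec, (hQproj y).1]
  set ρP : X → Matrix n n ℂ := fun x => Stmt7Aux.pure (vP x) with hρP
  set ρQ : Y → Matrix n n ℂ := fun y => Stmt7Aux.pure (vQ y) with hρQ
  have hρPpsd : ∀ x, (ρP x).PosSemidef := fun x => pure_psd (hjP x)
  have hρPtr : ∀ x, (ρP x).trace = 1 := fun x => pure_trace (hjP x)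
  have hρPfix : ∀ x, P x * ρP x = ρP x := fun x => pure_fixed _ (hvPfix x)
  have hρQpsd : ∀ y, (ρQ y).PosSemidef := fun y => pure_psd (hjQ y)
  have hρQtr : ∀ y, (ρQ y).trace = 1 := fun y => pure_trace (hjQ y)
  have hρQfix : ∀ y, Q y * ρQ y = ρQ y := fun y => pure_fixed _ (hvQfix y)
  -- averaging argument
  have keyP : ∀ x (σ : Matrix n n ℂ), σ.PosSemidef → σ.trace = 1 → P x * σ = σ →
      ∃ y, Q y * ρP x = ρP x ∧ Q y * σ = σ := by
    intro x σ hσ hσt hσf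
    set τ : Matrix n n ℂ := (((1/2 : ℝ)) : ℂ) • (ρP x + σ) with hτ
    have hτpsd : τ.PosSemidef := smul_psd ((hρPpsd x).add hσ) (by norm_num)
    have hτtr : τ.trace = 1 := by
      rw [hτ, Matrix.trace_smul, Matrix.trace_add, hρPtr x, hσt]
      push_cast; norm_num
    have hτfix : P x * τ = τ := by
      rw [hτ, Matrix.mul_smul, Matrix.mul_add, hρPfix x, hσf]
    obtain ⟨y, hy⟩ := hPtoQ τ hτpsd hτtr x hτfix
    set a : ℂ := (Q y * ρP x * Q y).trace with ha'
    set b : ℂ := (Q y * σ * Q y).trace with hb'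
    have h1 : (Q y * τ * Q y).trace = 1 :=
      (verifier_iff (hQproj y).1 (hQproj y).2 hτpsd hτtr).2 hy
    have hsum : a + b = 2 := by
      have hexp : (Q y * τ * Q y).trace = (2 : ℂ)⁻¹ * (a + b) := by
        rw [hτ, ha', hb']
        rw [Matrix.mul_smul, Matrix.smul_mul, Matrix.trace_smul, Matrix.mul_add,
          Matrix.add_mul, Matrix.trace_add, smul_eq_mul]
        push_cast; ring
      rw [hexp] at h1
      have h2 : (2 : ℂ) ≠ 0 := by norm_num
      field_simp at h1
      linear_combination h1
    have hale : a ≤ 1 := by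
      have := trace_sandwich_le (hQproj y).1 (hQproj y).2 (hρPpsd x)
      rwa [hρPtr x] at this
    have hble : b ≤ 1 := by
      have := trace_sandwich_le (hQproj y).1 (hQproj y).2 hσ
      rwa [hσt] at this
    have ha1 : a = 1 := by
      refine le_antisymm hale ?_
      have h2 : (2 : ℂ) ≤ a + 1 := by rw [← hsum]; exact add_le_add_right hble a
      calc (1 : ℂ) = 2 - 1 := by norm_num
      _ ≤ a + 1 - 1 := sub_le_sub_right h2 1
      _ = a := by ring
    have hb1 : b = 1 := by linear_combination hsum - ha1
    exact ⟨y,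
      (verifier_iff (hQproj y).1 (hQproj y).2 (hρPpsd x) (hρPtr x)).1 ha1,
      (verifier_iff (hQproj y).1 (hQproj y).2 hσ hσt).1 hb1⟩
  have keyQ : ∀ y (σ : Matrix n n ℂ), σ.PosSemidef → σ.trace = 1 → Q y * σ = σ →
      ∃ x, P x * ρQ y = ρQ y ∧ P x * σ = σ := by
    intro y σ hσ hσt hσf
    set τ : Matrix n n ℂ := (((1/2 : ℝ)) : ℂ) • (ρQ y + σ) with hτ
    have hτpsd : τ.PosSemidef := smul_psd ((hρQpsd y).add hσ) (by norm_num)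
    have hτtr : τ.trace = 1 := by
      rw [hτ, Matrix.trace_smul, Matrix.trace_add, hρQtr y, hσt]
      push_cast; norm_num
    have hτfix : Q y * τ = τ := by
      rw [hτ, Matrix.mul_smul, Matrix.mul_add, hρQfix y, hσf]
    obtain ⟨x, hx⟩ := hQtoP τ hτpsd hτtr y hτfix
    set a : ℂ := (P x * ρQ y * P x).trace with ha'
    set b : ℂ := (P x * σ * P x).trace with hb'
    have h1 : (P x * τ * P x).trace = 1 :=
      (verifier_iff (hPproj x).1 (hPproj x).2 hτpsd hτtr).2 hx
    have hsum : a + b = 2 := by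
      have hexp : (P x * τ * P x).trace = (2 : ℂ)⁻¹ * (a + b) := by
        rw [hτ, ha', hb']
        rw [Matrix.mul_smul, Matrix.smul_mul, Matrix.trace_smul, Matrix.mul_add,
          Matrix.add_mul, Matrix.trace_add, smul_eq_mul]
        push_cast; ring
      rw [hexp] at h1
      field_simp at h1
      linear_combination h1
    have hale : a ≤ 1 := by
      have := trace_sandwich_le (hPproj x).1 (hPproj x).2 (hρQpsd y)
      rwa [hρQtr y] at this
    have hble : b ≤ 1 := by
      have := trace_sandwich_le (hPproj x).1 (hPproj x).2 hσ
      rwa [hσt] at this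
    have ha1 : a = 1 := by
      refine le_antisymm hale ?_
      have h2 : (2 : ℂ) ≤ a + 1 := by rw [← hsum]; exact add_le_add_right hble a
      calc (1 : ℂ) = 2 - 1 := by norm_num
      _ ≤ a + 1 - 1 := sub_le_sub_right h2 1
      _ = a := by ring
    have hb1 : b = 1 := by linear_combination hsum - ha1
    exact ⟨x,
      (verifier_iff (hPproj x).1 (hPproj x).2 (hρQpsd y) (hρQtr y)).1 ha1,
      (verifier_iff (hPproj x).1 (hPproj x).2 hσ hσt).1 hb1⟩
  -- the correspondence
  choose f hf using fun x => keyP x (ρP x) (hρPpsd x) (hρPtr x) (hρPfix x)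
  choose g hg using fun y => keyQ y (ρQ y) (hρQpsd y) (hρQtr y) (hρQfix y)
  have hVPsub : ∀ x (σ : Matrix n n ℂ), σ.PosSemidef → σ.trace = 1 →
      P x * σ = σ → Q (f x) * σ = σ := by
    intro x σ h1 h2 h3
    obtain ⟨y, hy1, hy2⟩ := keyP x σ h1 h2 h3
    by_cases hxy : y = f x
    · rwa [hxy] at hy2
    · exact (fix_disjoint (hQorth y (f x) hxy) hy1 (hf x).1 (hρPtr x)).elim
  have hVQsub : ∀ y (σ : Matrix n n ℂ), σ.PosSemidef → σ.trace = 1 →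
      Q y * σ = σ → P (g y) * σ = σ := by
    intro y σ h1 h2 h3
    obtain ⟨x, hx1, hx2⟩ := keyQ y σ h1 h2 h3
    by_cases hxy : x = g y
    · rwa [hxy] at hx2
    · exact (fix_disjoint (hPorth x (g y) hxy) hx1 (hg y).1 (hρQtr y)).elim
  have hgf : ∀ x, g (f x) = x := by
    intro x
    have h2 : P (g (f x)) * ρP x = ρP x :=
      hVQsub (f x) (ρP x) (hρPpsd x) (hρPtr x) (hf x).1
    by_cases h : g (f x) = x
    · exact h
    · exact (fix_disjoint (hPorth _ x h) h2 (hρPfix x) (hρPtr x)).elim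
  have hfg : ∀ y, f (g y) = y := by
    intro y
    have h2 : Q (f (g y)) * ρQ y = ρQ y :=
      hVPsub (g y) (ρQ y) (hρQpsd y) (hρQtr y) (hg y).1
    by_cases h : f (g y) = y
    · exact h
    · exact (fix_disjoint (hQorth _ y h) h2 (hρQfix y) (hρQtr y)).elim
  -- projection equality
  have hfix1 : ∀ x (w : n → ℂ), P x *ᵥ w = w → Q (f x) *ᵥ w = w := by
    intro x w hw
    by_cases hw0 : w = 0
    · simp [hw0]
    · exact pure_fixes hw0 _
        (hVPsub x (Stmt7Aux.pure w) (pure_psd hw0) (pure_trace hw0) (pure_fixed _ hw))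
  have hfix2 : ∀ x (w : n → ℂ), Q (f x) *ᵥ w = w → P x *ᵥ w = w := by
    intro x w hw
    by_cases hw0 : w = 0
    · simp [hw0]
    · have := hVQsub (f x) (Stmt7Aux.pure w) (pure_psd hw0) (pure_trace hw0)
        (pure_fixed _ hw)
      rw [hgf x] at this
      exact pure_fixes hw0 _ this
  have hPQ : ∀ x, P x = Q (f x) := by
    intro x
    have hQP : Q (f x) * P x = P x := by
      apply Stmt7Aux.ext_of_mulVec_single
      intro j
      rw [← Matrix.mulVec_mulVec]
      exact hfix1 x _ (by rw [Matrix.mulVec_mulVec, (hPproj x).1])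
    have hPQ2 : P x * Q (f x) = Q (f x) := by
      apply Stmt7Aux.ext_of_mulVec_single
      intro j
      rw [← Matrix.mulVec_mulVec]
      exact hfix2 x _ (by rw [Matrix.mulVec_mulVec, (hQproj (f x)).1])
    calc P x = (Q (f x) * P x)ᴴ := by rw [hQP, (hPproj x).2]
    _ = (P x)ᴴ * (Q (f x))ᴴ := Matrix.conjTranspose_mul _ _
    _ = P x * Q (f x) := by rw [(hPproj x).2, (hQproj (f x)).2]
    _ = Q (f x) := hPQ2
  refine ⟨?_, ⟨⟨f, g, hgf, hfg⟩, hPQ⟩⟩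
  intro x
  refine ⟨f x, by rw [hPQ x], ?_⟩
  intro y' hy'
  have hmem : ρP x ∈ {ρ : Matrix n n ℂ | ρ.PosSemidef ∧ ρ.trace = 1 ∧
      (P x * ρ * P x).trace = 1} :=
    ⟨hρPpsd x, hρPtr x,
      (verifier_iff (hPproj x).1 (hPproj x).2 (hρPpsd x) (hρPtr x)).2 (hρPfix x)⟩
  rw [hy'] at hmem
  have hQy' : Q y' * ρP x = ρP x :=
    (verifier_iff (hQproj y').1 (hQproj y').2 (hρPpsd x) (hρPtr x)).1 hmem.2.2
  by_contra h
  exact fix_disjoint (hQorth y' (f x) h) hQy' (hf x).1 (hρPtr x)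
end

section
/- Extremality of single-Kraus maps: if K : H → H is a linear operator and A, B are completely positive maps with A + B = (ρ ↦ KρK†), then A(ρ) = λKρK† and B(ρ) = (1−λ)KρK† for some λ ∈ [0,1]. -/
open Matrix ComplexOrder

lemma rankone_span {ι : Type*} [Fintype ι] {m : ℕ}
    (v : Fin m → EuclideanSpace ℂ ι) (u : EuclideanSpace ℂ ι)
    (H : ∀ x y : ι, (∑ k, v k x * star (v k y)) = u x * star (u y)) :
    ∀ k, ∃ c : ℂ, v k = c • u := by
  have key : ∀ z : EuclideanSpace ℂ ι,
      ∑ k, (inner ℂ z (v k) : ℂ) * star (inner ℂ z (v k) : ℂ)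
        = (inner ℂ z u : ℂ) * star (inner ℂ z u : ℂ) := by
    intro z
    have expand : ∀ w : EuclideanSpace ℂ ι,
        (inner ℂ z w : ℂ) * star (inner ℂ z w : ℂ)
          = ∑ x, ∑ y, (star (z x) * z y) * (w x * star (w y)) := by
      intro w
      simp only [PiLp.inner_apply, RCLike.inner_apply, star_sum, star_mul', starRingEnd_apply,
        star_star, Finset.sum_mul_sum]
      apply Finset.sum_congr rfl; intro x _; apply Finset.sum_congr rfl; intro y _
      ring
    simp only [expand]
    rw [Finset.sum_comm]
    apply Finset.sum_congr rfl; intro x _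
    rw [Finset.sum_comm]
    apply Finset.sum_congr rfl; intro y _
    rw [← Finset.mul_sum, H]
  have key0 : ∀ z : EuclideanSpace ℂ ι, (inner ℂ z u : ℂ) = 0 →
      ∀ k, (inner ℂ z (v k) : ℂ) = 0 := by
    intro z hz k
    have h2 : ∑ k, Complex.normSq (inner ℂ z (v k) : ℂ) = 0 := by
      have := key z
      rw [hz, zero_mul] at this
      simp only [Complex.star_def, Complex.mul_conj] at this
      exact_mod_cast this
    have := (Finset.sum_eq_zero_iff_of_nonneg (fun k _ => Complex.normSq_nonneg _)).mp h2
      k (Finset.mem_univ k)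
    exact Complex.normSq_eq_zero.mp this
  intro k
  have hmem : v k ∈ Submodule.span ℂ ({u} : Set (EuclideanSpace ℂ ι)) := by
    rw [← Submodule.orthogonal_orthogonal (Submodule.span ℂ {u})]
    rw [Submodule.mem_orthogonal]
    intro z hz
    have hzu : (inner ℂ u z : ℂ) = 0 := hz u (Submodule.mem_span_singleton_self u)
    have : (inner ℂ z u : ℂ) = 0 := by
      rw [← inner_conj_symm, hzu, map_zero]
    exact key0 z this k
  obtain ⟨c, hc⟩ := Submodule.mem_span_singleton.mp hmem
  exact ⟨c, hc.symm⟩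

lemma kraus_entry {n : Type*} [Fintype n] [DecidableEq n] (M : Matrix n n ℂ) (i j a b : n) :
    (M * Matrix.single i j (1:ℂ) * Mᴴ) a b = M a i * star (M b j) := by
  simp [Matrix.mul_apply, Matrix.single, conjTranspose_apply, mul_ite, ite_mul,
    Finset.mul_sum, ite_and, Finset.sum_ite_eq, Finset.sum_ite_eq']

/-- Extremality of single-Kraus maps: if completely positive maps `A`, `B`
satisfy `A + B = (ρ ↦ KρKᴴ)`, then `A` and `B` are nonnegative multiples
`λ`, `1-λ` of that map with `λ ∈ [0,1]`. -/
theorem stmt_15 {n : Type*} [Fintype n] [DecidableEq n]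
    (K : Matrix n n ℂ)
    (A B : Matrix n n ℂ → Matrix n n ℂ)
    (hA : ∃ (m : ℕ) (M : Fin m → Matrix n n ℂ),
      ∀ ρ, A ρ = ∑ i, M i * ρ * (M i)ᴴ)
    (hB : ∃ (m : ℕ) (M : Fin m → Matrix n n ℂ),
      ∀ ρ, B ρ = ∑ i, M i * ρ * (M i)ᴴ)
    (hsum : ∀ ρ : Matrix n n ℂ, A ρ + B ρ = K * ρ * Kᴴ) :
    ∃ lam : ℝ, 0 ≤ lam ∧ lam ≤ 1 ∧
      (∀ ρ : Matrix n n ℂ, A ρ = (lam : ℂ) • (K * ρ * Kᴴ)) ∧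
      (∀ ρ : Matrix n n ℂ, B ρ = ((1 - lam : ℝ) : ℂ) • (K * ρ * Kᴴ)) := by
  obtain ⟨mA, MA, hMA⟩ := hA
  obtain ⟨mB, MB, hMB⟩ := hB
  -- vectorized operators
  set u : EuclideanSpace ℂ (n × n) := WithLp.toLp 2 (fun p : n × n => K p.2 p.1) with hu
  set v : Fin (mA + mB) → EuclideanSpace ℂ (n × n) :=
    Fin.append (fun k => WithLp.toLp 2 (fun (p : n × n) => MA k p.2 p.1))
      (fun k => WithLp.toLp 2 (fun (p : n × n) => MB k p.2 p.1)) with hv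
  have H : ∀ p q : n × n, (∑ k, v k p * star (v k q)) = u p * star (u q) := by
    intro p q
    have h := congrFun (congrFun (hsum (Matrix.single p.1 q.1 (1:ℂ))) p.2) q.2
    rw [Matrix.add_apply, hMA, hMB, Matrix.sum_apply, Matrix.sum_apply] at h
    simp only [kraus_entry] at h
    rw [hv, Fin.sum_univ_add]
    simp only [Fin.append_left, Fin.append_right]
    exact h
  have hspan := rankone_span v u H
  have hMAc : ∀ k : Fin mA, ∃ c : ℂ, MA k = c • K := by
    intro k
    obtain ⟨c, hc⟩ := hspan (Fin.castAdd mB k)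
    refine ⟨c, ?_⟩
    ext a i
    have h2 := congrArg (fun w : EuclideanSpace ℂ (n × n) => w (i, a)) hc
    simpa [hv, hu, Fin.append_left] using h2
  have hMBc : ∀ k : Fin mB, ∃ c : ℂ, MB k = c • K := by
    intro k
    obtain ⟨c, hc⟩ := hspan (Fin.natAdd mA k)
    refine ⟨c, ?_⟩
    ext a i
    have h2 := congrArg (fun w : EuclideanSpace ℂ (n × n) => w (i, a)) hc
    simpa [hv, hu, Fin.append_right] using h2
  choose cA hcA using hMAc
  choose cB hcB using hMBc
  set lamA : ℝ := ∑ k, Complex.normSq (cA k) with hlamA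
  set lamB : ℝ := ∑ k, Complex.normSq (cB k) with hlamB
  have hAform : ∀ ρ, A ρ = ((lamA : ℝ) : ℂ) • (K * ρ * Kᴴ) := by
    intro ρ
    rw [hMA]
    have : ∀ k, MA k * ρ * (MA k)ᴴ
        = ((Complex.normSq (cA k) : ℝ) : ℂ) • (K * ρ * Kᴴ) := by
      intro k
      rw [hcA k]
      simp only [smul_mul_assoc, mul_smul_comm, smul_smul, conjTranspose_smul]
      rw [Complex.star_def, mul_comm, Complex.mul_conj]
    simp only [this, ← Finset.sum_smul, hlamA]
    push_cast
    ring_nf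
  have hBform : ∀ ρ, B ρ = ((lamB : ℝ) : ℂ) • (K * ρ * Kᴴ) := by
    intro ρ
    rw [hMB]
    have : ∀ k, MB k * ρ * (MB k)ᴴ
        = ((Complex.normSq (cB k) : ℝ) : ℂ) • (K * ρ * Kᴴ) := by
      intro k
      rw [hcB k]
      simp only [smul_mul_assoc, mul_smul_comm, smul_smul, conjTranspose_smul]
      rw [Complex.star_def, mul_comm, Complex.mul_conj]
    simp only [this, ← Finset.sum_smul, hlamB]
    push_cast
    ring_nf
  have hlamA0 : 0 ≤ lamA := Finset.sum_nonneg fun k _ => Complex.normSq_nonneg _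
  have hlamB0 : 0 ≤ lamB := Finset.sum_nonneg fun k _ => Complex.normSq_nonneg _
  by_cases hK : K = 0
  · refine ⟨0, le_refl 0, zero_le_one, ?_, ?_⟩
    · intro ρ; simp [hAform ρ, hK]
    · intro ρ; simp [hBform ρ, hK]
  · -- K ≠ 0: K * Kᴴ ≠ 0
    have hKK : K * Kᴴ ≠ 0 := by
      have hex : ∃ a i, K a i ≠ 0 := by
        by_contra h
        push_neg at h
        exact hK (by ext a i; exact h a i)
      obtain ⟨a, i, hai⟩ := hex
      intro h0
      have h1 : (K * Kᴴ) a a = ((∑ j, Complex.normSq (K a j) : ℝ) : ℂ) := by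
        push_cast
        simp [Matrix.mul_apply, conjTranspose_apply, Complex.star_def, Complex.mul_conj]
      have h2 : (0:ℝ) < ∑ j, Complex.normSq (K a j) :=
        Finset.sum_pos' (fun j _ => Complex.normSq_nonneg _)
          ⟨i, Finset.mem_univ i, Complex.normSq_pos.mpr hai⟩
      have h3 : (K * Kᴴ) a a = 0 := by rw [h0]; rfl
      rw [h1] at h3
      exact absurd (Complex.ofReal_eq_zero.mp h3) (ne_of_gt h2)
    have hsum1 : lamA + lamB = 1 := by
      have h1 := hsum 1
      rw [hAform 1, hBform 1, mul_one, ← add_smul] at h1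
      have h2 : ((lamA : ℂ) + (lamB : ℂ) - 1) • (K * Kᴴ) = 0 := by
        rw [sub_smul, one_smul, h1, sub_self]
      rcases smul_eq_zero.mp h2 with h3 | h3
      · have : ((lamA + lamB : ℝ) : ℂ) = ((1:ℝ) : ℂ) := by
          push_cast
          linear_combination h3
        exact_mod_cast this
      · exact absurd h3 hKK
    refine ⟨lamA, hlamA0, by linarith, hAform, ?_⟩
    intro ρ
    have h5 : (1 - lamA : ℝ) = lamB := by linarith
    rw [hBform ρ, h5]
end

section
/- If two POVMs {A_x}_{x∈X} and {B_y}_{y∈Y} on a finite-dimensional Hilbert space admit a joint POVM {C_{x,y}} with Σ_y C_{x,y} = A_x and Σ_x C_{x,y} = B_y, and all A_x, B_y are nonzero rank-one-proportional effects (atomic) with the families non-redundant (no two effects of the same POVM proportional), then |X| = |Y| and there is a bijection matching A_x = B_{y(x)}; i.e., compatible atomic non-redundant POVMs are equal up to relabeling. -/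
open Matrix ComplexOrder

set_option linter.unusedSectionVars false
set_option maxHeartbeats 1600000

section Helpers

variable {n : Type*} [Fintype n] [DecidableEq n]

private lemma vecMulVec_mulVec' (v w u : n → ℂ) :
    vecMulVec v w *ᵥ u = (w ⬝ᵥ u) • v := by
  funext i
  simp [vecMulVec, mulVec, dotProduct, Finset.sum_mul, Finset.mul_sum, mul_comm, mul_left_comm]

private lemma psd_sum {ι : Type*} (s : Finset ι) (f : ι → Matrix n n ℂ)
    (h : ∀ i ∈ s, (f i).PosSemidef) : (∑ i ∈ s, f i).PosSemidef := by
  classical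
  induction s using Finset.induction_on with
  | empty => simpa using Matrix.PosSemidef.zero
  | insert a s' hx ih =>
      rw [Finset.sum_insert hx]
      exact (h a (Finset.mem_insert_self a s')).add
        (ih fun i hi => h i (Finset.mem_insert_of_mem hi))

private lemma extract_rankone {P : Matrix n n ℂ} (hP : P.PosSemidef) (h0 : P ≠ 0)
    (hr : P.rank ≤ 1) : ∃ v : n → ℂ, v ≠ 0 ∧ P = vecMulVec v (star v) := by
  have hH := hP.1
  have hcard : Fintype.card {i // hH.eigenvalues i ≠ 0} ≤ 1 := by
    rw [← hH.rank_eq_card_non_zero_eigs]; exact hr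
  by_cases hall : ∀ i, hH.eigenvalues i = 0
  · exfalso
    apply h0
    have hspec := hH.spectral_theorem
    rw [hspec]
    have : (RCLike.ofReal ∘ hH.eigenvalues : n → ℂ) = 0 := by
      funext i
      show (RCLike.ofReal (hH.eigenvalues i) : ℂ) = 0
      rw [hall i]; simp
    rw [this, show (diagonal (0 : n → ℂ)) = 0 from by ext i j; simp [diagonal_apply],
      map_zero]
  · push_neg at hall
    obtain ⟨i₀, hi₀⟩ := hall
    have huniq : ∀ i, hH.eigenvalues i ≠ 0 → i = i₀ := by
      intro i hi
      by_contra hne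
      have h2 : 2 ≤ Fintype.card {i // hH.eigenvalues i ≠ 0} := by
        have hc : ({⟨i, hi⟩, ⟨i₀, hi₀⟩} : Finset {i // hH.eigenvalues i ≠ 0}).card = 2 := by
          rw [Finset.card_insert_of_notMem (by simp [hne]), Finset.card_singleton]
        rw [← hc]
        exact Finset.card_le_card (Finset.subset_univ _)
      omega
    set lam := hH.eigenvalues i₀ with hlam
    have hlampos : 0 < lam := lt_of_le_of_ne (hP.eigenvalues_nonneg i₀) (Ne.symm hi₀)
    set U : Matrix n n ℂ := (hH.eigenvectorUnitary : Matrix n n ℂ) with hU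
    set v : n → ℂ := fun i => (Real.sqrt lam : ℂ) * U i i₀ with hv
    have hs : (Real.sqrt lam : ℂ) * (Real.sqrt lam : ℂ) = (lam : ℂ) := by
      rw [← Complex.ofReal_mul, Real.mul_self_sqrt hlampos.le]
    have hPeq : P = vecMulVec v (star v) := by
      have hspec := hH.spectral_theorem
      have hd : (RCLike.ofReal ∘ hH.eigenvalues : n → ℂ) = Pi.single i₀ (lam : ℂ) := by
        funext i
        by_cases hi : i = i₀
        · subst hi; simp [hlam]
        · have hz : hH.eigenvalues i = 0 := by
            by_contra hne; exact hi (huniq i hne)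
          show (RCLike.ofReal (hH.eigenvalues i) : ℂ) = _
          simp [hz, Pi.single_apply, hi]
      rw [hspec, hd, Unitary.conjStarAlgAut_apply]
      ext i j
      simp only [Matrix.mul_apply, Matrix.diagonal_apply, Pi.single_apply, Matrix.star_apply,
        vecMulVec, of_apply, Pi.star_apply, mul_ite, ite_mul, zero_mul, mul_zero,
        Finset.sum_ite_eq', Finset.mem_univ, if_true, hv]
      rw [star_mul']
      rw [show star ((Real.sqrt lam : ℂ)) = (Real.sqrt lam : ℂ) by
        simp [Complex.star_def, Complex.conj_ofReal]]
      ring_nf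
      rw [pow_two, hs]
      ring
    refine ⟨v, fun hv0 => h0 ?_, hPeq⟩
    rw [hPeq, hv0]
    ext i j
    simp [vecMulVec]

private lemma key_lemma {v : n → ℂ} (hv : v ≠ 0) {C : Matrix n n ℂ} (hC : C.PosSemidef)
    (hPC : (vecMulVec v (star v) - C).PosSemidef) (hC0 : C ≠ 0) :
    ∃ t : ℝ, 0 < t ∧ C = (t : ℂ) • vecMulVec v (star v) := by
  set P := vecMulVec v (star v) with hP
  set ν : ℂ := star v ⬝ᵥ v with hnu
  have hν : ν ≠ 0 := fun h => hv (dotProduct_star_self_eq_zero.mp h)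
  have hker : ∀ w : n → ℂ, star v ⬝ᵥ w = 0 → C *ᵥ w = 0 := by
    intro w hw
    have h1 : 0 ≤ star w ⬝ᵥ C *ᵥ w := hC.dotProduct_mulVec_nonneg w
    have hPw : P *ᵥ w = 0 := by rw [hP, vecMulVec_mulVec', hw, zero_smul]
    have h2 : 0 ≤ star w ⬝ᵥ (P - C) *ᵥ w := hPC.dotProduct_mulVec_nonneg w
    rw [sub_mulVec, dotProduct_sub, hPw, dotProduct_zero, zero_sub, le_neg, neg_zero] at h2
    exact (hC.dotProduct_mulVec_zero_iff w).mp (le_antisymm h2 h1)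
  set μ : ℂ := star v ⬝ᵥ C *ᵥ v with hmu
  have hμ0 : 0 ≤ μ := hC.dotProduct_mulVec_nonneg v
  have hCv : C *ᵥ v = (μ / ν) • v := by
    set z : n → ℂ := C *ᵥ v - (μ / ν) • v with hz
    have hvz : star v ⬝ᵥ z = 0 := by
      rw [hz, dotProduct_sub, dotProduct_smul, ← hmu, ← hnu, smul_eq_mul,
        div_mul_cancel₀ _ hν, sub_self]
    have hCz : C *ᵥ z = 0 := hker z hvz
    have hzv : star z ⬝ᵥ v = 0 := by
      have : star z ⬝ᵥ v = star (star v ⬝ᵥ z) := by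
        simp [dotProduct, Finset.sum_comm, mul_comm]
      rw [this, hvz, star_zero]
    have hzz : star z ⬝ᵥ z = 0 := by
      have hzCv : star z ⬝ᵥ (C *ᵥ v) = 0 := by
        rw [dotProduct_mulVec]
        have : star z ᵥ* C = star (C *ᵥ z) := by
          rw [star_mulVec, hC.1]
        rw [this, hCz, star_zero, zero_dotProduct]
      have e1 : star z ⬝ᵥ z = star z ⬝ᵥ (C *ᵥ v - (μ / ν) • v) := by rw [← hz]
      rw [e1, dotProduct_sub, dotProduct_smul, smul_eq_mul, hzCv, hzv, mul_zero, sub_zero]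
    have : z = 0 := dotProduct_star_self_eq_zero.mp hzz
    rw [hz] at this
    exact sub_eq_zero.mp this
  have hμre : μ = (μ.re : ℂ) ∧ 0 ≤ μ.re := by
    rw [Complex.nonneg_iff] at hμ0
    constructor
    · exact (Complex.ext (by simp) (by simp [hμ0.2.symm])).symm
    · exact hμ0.1
  have hνnn : 0 ≤ ν := by
    rw [hnu]
    exact dotProduct_star_self_nonneg v
  have hνre : ν = (ν.re : ℂ) ∧ 0 < ν.re := by
    rw [Complex.nonneg_iff] at hνnn
    refine ⟨(Complex.ext (by simp) (by simp [hνnn.2.symm])).symm, ?_⟩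
    rcases lt_or_eq_of_le hνnn.1 with h | h
    · exact h
    · exfalso; apply hν
      exact Complex.ext (by simp [h.symm]) (by simp [hνnn.2.symm])
  have hμne : μ ≠ 0 := by
    intro hμz
    apply hC0
    have hCv0 : C *ᵥ v = 0 := by rw [hCv, hμz, zero_div, zero_smul]
    have hall : ∀ u, C *ᵥ u = 0 := by
      intro u
      have hdec : u = ((star v ⬝ᵥ u) / ν) • v + (u - ((star v ⬝ᵥ u) / ν) • v) := by ring_nf
      have hw : star v ⬝ᵥ (u - ((star v ⬝ᵥ u) / ν) • v) = 0 := by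
        rw [dotProduct_sub, dotProduct_smul, smul_eq_mul, ← hnu, div_mul_cancel₀ _ hν, sub_self]
      calc C *ᵥ u = C *ᵥ (((star v ⬝ᵥ u) / ν) • v + (u - ((star v ⬝ᵥ u) / ν) • v)) := by
            rw [← hdec]
        _ = ((star v ⬝ᵥ u) / ν) • (C *ᵥ v) + C *ᵥ (u - ((star v ⬝ᵥ u) / ν) • v) := by
            rw [mulVec_add, mulVec_smul]
        _ = 0 := by rw [hCv0, hker _ hw, smul_zero, add_zero]
    ext i j
    simpa using congrFun (hall (Pi.single j 1)) i
  refine ⟨μ.re / ν.re ^ 2, ?_, ?_⟩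
  · apply div_pos
    · rcases lt_or_eq_of_le hμre.2 with h | h
      · exact h
      · exfalso; apply hμne
        exact Complex.ext (by simp [h.symm]) (by
          have := Complex.nonneg_iff.mp hμ0; simp [this.2.symm])
    · exact pow_pos hνre.2 2
  · have hcast : ((μ.re / ν.re ^ 2 : ℝ) : ℂ) = μ / ν ^ 2 := by
      rw [Complex.ofReal_div, Complex.ofReal_pow, ← hμre.1, ← hνre.1]
    apply Matrix.ext
    intro i j
    have hall : ∀ u, C *ᵥ u = (((μ.re / ν.re ^ 2 : ℝ) : ℂ) • P) *ᵥ u := by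
      intro u
      have hdec : u = ((star v ⬝ᵥ u) / ν) • v + (u - ((star v ⬝ᵥ u) / ν) • v) := by ring_nf
      have hw : star v ⬝ᵥ (u - ((star v ⬝ᵥ u) / ν) • v) = 0 := by
        rw [dotProduct_sub, dotProduct_smul, smul_eq_mul, ← hnu, div_mul_cancel₀ _ hν, sub_self]
      have lhs : C *ᵥ u = (((star v ⬝ᵥ u) / ν) * (μ / ν)) • v := by
        calc C *ᵥ u = C *ᵥ (((star v ⬝ᵥ u) / ν) • v + (u - ((star v ⬝ᵥ u) / ν) • v)) := by
              rw [← hdec]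
          _ = ((star v ⬝ᵥ u) / ν) • (C *ᵥ v) + C *ᵥ (u - ((star v ⬝ᵥ u) / ν) • v) := by
              rw [mulVec_add, mulVec_smul]
          _ = _ := by rw [hCv, hker _ hw, add_zero, smul_smul]
      have rhs : (((μ.re / ν.re ^ 2 : ℝ) : ℂ) • P) *ᵥ u = ((μ / ν ^ 2) * (star v ⬝ᵥ u)) • v := by
        rw [smul_mulVec, hP, vecMulVec_mulVec', smul_smul, hcast]
      rw [lhs, rhs]
      congr 1
      field_simp
    simpa using congrFun (hall (Pi.single j 1)) i

private lemma smul_cancel_aux {M N : Matrix n n ℂ} {a b : ℝ} (ha : 0 < a)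
    (h : (a : ℂ) • M = (b : ℂ) • N) : M = ((b / a : ℝ) : ℂ) • N := by
  have ha0 : (a : ℂ) ≠ 0 := by exact_mod_cast ha.ne'
  calc M = (a : ℂ)⁻¹ • ((a : ℂ) • M) := by rw [smul_smul, inv_mul_cancel₀ ha0, one_smul]
    _ = (a : ℂ)⁻¹ • ((b : ℂ) • N) := by rw [h]
    _ = ((b / a : ℝ) : ℂ) • N := by
        rw [smul_smul]; congr 1; push_cast; field_simp

private lemma prop_trans {M N Q : Matrix n n ℂ} {c c' : ℝ} (hc' : 0 < c')
    (h1 : M = (c : ℂ) • Q) (h2 : N = (c' : ℂ) • Q) : M = ((c / c' : ℝ) : ℂ) • N := by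
  have hc0 : (c' : ℂ) ≠ 0 := by exact_mod_cast hc'.ne'
  subst h1; subst h2
  rw [smul_smul]
  congr 1
  push_cast
  field_simp

end Helpers

/-- Compatible atomic (rank-one) non-redundant POVMs are equal up to a
bijective relabeling of outcomes. -/
theorem stmt_16 {n X Y : Type*} [Fintype n] [DecidableEq n]
    [Fintype X] [DecidableEq X] [Fintype Y] [DecidableEq Y]
    (A : X → Matrix n n ℂ) (B : Y → Matrix n n ℂ)
    (hApsd : ∀ x, (A x).PosSemidef) (hAsum : ∑ x, A x = 1)
    (hBpsd : ∀ y, (B y).PosSemidef) (hBsum : ∑ y, B y = 1)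
    (hAatom : ∀ x, A x ≠ 0 ∧ (A x).rank ≤ 1)
    (hBatom : ∀ y, B y ≠ 0 ∧ (B y).rank ≤ 1)
    (hAnr : ∀ x x', x ≠ x' → ∀ c : ℝ, 0 < c → A x ≠ (c : ℂ) • A x')
    (hBnr : ∀ y y', y ≠ y' → ∀ c : ℝ, 0 < c → B y ≠ (c : ℂ) • B y')
    (hcompat : ∃ C : X → Y → Matrix n n ℂ,
      (∀ x y, (C x y).PosSemidef) ∧
      (∀ x, ∑ y, C x y = A x) ∧
      (∀ y, ∑ x, C x y = B y)) :
    Fintype.card X = Fintype.card Y ∧ ∃ e : X ≃ Y, ∀ x, A x = B (e x) := by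
  obtain ⟨C, hCpsd, hCA, hCB⟩ := hcompat
  have hAC : ∀ x y, (A x - C x y).PosSemidef := by
    intro x y
    have h := Finset.add_sum_erase Finset.univ (C x) (Finset.mem_univ y)
    have : A x - C x y = ∑ y' ∈ Finset.univ.erase y, C x y' := by
      rw [← hCA x, ← h, add_sub_cancel_left]
    rw [this]
    exact psd_sum _ _ (fun i _ => hCpsd x i)
  have hBC : ∀ x y, (B y - C x y).PosSemidef := by
    intro x y
    have h := Finset.add_sum_erase Finset.univ (fun x' => C x' y) (Finset.mem_univ x)
    have : B y - C x y = ∑ x' ∈ Finset.univ.erase x, C x' y := by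
      rw [← hCB y, ← h, add_sub_cancel_left]
    rw [this]
    exact psd_sum _ _ (fun i _ => hCpsd i y)
  have prop : ∀ x y, C x y ≠ 0 → ∃ c c' : ℝ, 0 < c ∧ 0 < c' ∧
      A x = (c : ℂ) • B y ∧ B y = (c' : ℂ) • A x := by
    intro x y hne
    obtain ⟨v, hv, hAv⟩ := extract_rankone (hApsd x) (hAatom x).1 (hAatom x).2
    obtain ⟨w, hw, hBw⟩ := extract_rankone (hBpsd y) (hBatom y).1 (hBatom y).2
    obtain ⟨t, ht, hCt⟩ := key_lemma hv (hCpsd x y) (by rw [← hAv]; exact hAC x y) hne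
    obtain ⟨s, hs, hCs⟩ := key_lemma hw (hCpsd x y) (by rw [← hBw]; exact hBC x y) hne
    have h1 : (t : ℂ) • A x = (s : ℂ) • B y := by rw [hAv, hBw, ← hCt, ← hCs]
    exact ⟨s / t, t / s, div_pos hs ht, div_pos ht hs,
      smul_cancel_aux ht h1, smul_cancel_aux hs h1.symm⟩
  have hgex : ∀ x, ∃ y, C x y ≠ 0 ∧ ∀ y', C x y' ≠ 0 → y' = y := by
    intro x
    have hex : ∃ y, C x y ≠ 0 := by
      by_contra h
      push_neg at h
      exact (hAatom x).1 (by rw [← hCA x]; exact Finset.sum_eq_zero (fun y _ => h y))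
    obtain ⟨y, hy⟩ := hex
    refine ⟨y, hy, fun y' hy' => ?_⟩
    by_contra hne
    obtain ⟨c, d, hc, hd, hAc, hBc⟩ := prop x y hy
    obtain ⟨c', d', hc', hd', hAc', hBc'⟩ := prop x y' hy'
    exact hBnr y' y hne (d' / d) (div_pos hd' hd) (prop_trans hd hBc' hBc)
  have hfex : ∀ y, ∃ x, C x y ≠ 0 ∧ ∀ x', C x' y ≠ 0 → x' = x := by
    intro y
    have hex : ∃ x, C x y ≠ 0 := by
      by_contra h
      push_neg at h
      exact (hBatom y).1 (by rw [← hCB y]; exact Finset.sum_eq_zero (fun x _ => h x))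
    obtain ⟨x, hx⟩ := hex
    refine ⟨x, hx, fun x' hx' => ?_⟩
    by_contra hne
    obtain ⟨c, d, hc, hd, hAc, hBc⟩ := prop x y hx
    obtain ⟨c', d', hc', hd', hAc', hBc'⟩ := prop x' y hx'
    exact hAnr x' x hne (c' / c) (div_pos hc' hc) (prop_trans hc hAc' hAc)
  choose g hg1 hg2 using hgex
  choose f hf1 hf2 using hfex
  let e : X ≃ Y :=
    ⟨g, f, fun x => (hf2 (g x) x (hg1 x)).symm, fun y => (hg2 (f y) y (hf1 y)).symm⟩
  refine ⟨Fintype.card_congr e, e, ?_⟩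
  intro x
  have h1 : ∑ y', C x y' = C x (g x) :=
    Finset.sum_eq_single_of_mem _ (Finset.mem_univ _)
      (fun y' _ hne => by by_contra h; exact hne (hg2 x y' h))
  have h2 : ∑ x', C x' (g x) = C x (g x) :=
    Finset.sum_eq_single_of_mem _ (Finset.mem_univ _)
      (fun x' _ hne => by by_contra h; exact hne ((hf2 (g x) x' h).trans (hf2 (g x) x (hg1 x)).symm))
  show A x = B (g x)
  rw [← hCA x, h1, ← h2, hCB]
end
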